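/- Let A be an n×n matrix over a field with all off-diagonal entries nonzero, and let S be a cut of A. For any T ⊆ [n] such that T ⊆ S, T is a cut of A if and only if T is a cut of tw(A,S). -/

import Mathlib

open Matrix

/-- `X` is a cut of `A`. -/
def IsCut {F : Type*} [Field F] {m : Type*} [Fintype m] [DecidableEq m]
    (A : Matrix m m F) (X : Finset m) : Prop :=
  2 ≤ X.card ∧ X.card + 2 ≤ Fintype.card m ∧
  (A.submatrix (fun i : X => (i : m)) (fun j : (Xᶜ : Finset m) => (j : m))).rank ≤ 1 ∧
  (A.submatrix (fun i : (Xᶜ : Finset m) => (i : m)) (fun j : X => (j : m))).rank ≤ 1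

/-- The cut-transpose of `A` with respect to the cut `X`, given rank-one
factorizations `A[X,X̄] = p·qᵀ` and `A[X̄,X] = u·vᵀ`. -/
def cutTranspose {F : Type*} [Field F] {n : ℕ} (A : Matrix (Fin n) (Fin n) F)
    (X : Finset (Fin n)) (p v q u : Fin n → F) : Matrix (Fin n) (Fin n) F :=
  fun i j =>
    if i ∈ X then (if j ∈ X then A i j else p i * u j)
    else (if j ∈ X then q i * v j else A j i)
theorem cut_subset_iff_cut_of_cutTranspose {n : ℕ} {F : Type*} [Field F]
    (A : Matrix (Fin n) (Fin n) F)
    (hoff : ∀ i j : Fin n, i ≠ j → A i j ≠ 0)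
    (S : Finset (Fin n)) (hS : IsCut A S) (p v q u : Fin n → F)
    (hpq : ∀ i ∈ S, ∀ j ∉ S, A i j = p i * q j)
    (huv : ∀ i ∉ S, ∀ j ∈ S, A i j = u i * v j)
    (T : Finset (Fin n)) (hT : T ⊆ S) :
    IsCut A T ↔ IsCut (cutTranspose A S p v q u) T := by
  obtain ⟨hS2, hSn, -, -⟩ := hS
  obtain ⟨i0, hi0⟩ := Finset.card_pos.mp (by omega : 0 < S.card)
  have hq : ∀ j ∉ S, q j ≠ 0 := by
    intro j hj
    have hne : i0 ≠ j := fun h => hj (h ▸ hi0)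
    have h := hoff i0 j hne
    rw [hpq i0 hi0 j hj] at h
    exact right_ne_zero_of_mul h
  have hu : ∀ j ∉ S, u j ≠ 0 := by
    intro j hj
    have hne : j ≠ i0 := fun h => hj (h ▸ hi0)
    have h := hoff j i0 hne
    rw [huv j hj i0 hi0] at h
    exact left_ne_zero_of_mul h
  set B := cutTranspose A S p v q u with hBdef
  have h1 : (B.submatrix (fun i : T => (i : Fin n))
        (fun j : (Tᶜ : Finset (Fin n)) => (j : Fin n))).rank
      = (A.submatrix (fun i : T => (i : Fin n))
        (fun j : (Tᶜ : Finset (Fin n)) => (j : Fin n))).rank := by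
    set c : (Tᶜ : Finset (Fin n)) → F :=
      fun j => if (j : Fin n) ∈ S then 1 else u j / q j with hc
    have heq : B.submatrix (fun i : T => (i : Fin n))
        (fun j : (Tᶜ : Finset (Fin n)) => (j : Fin n))
        = A.submatrix (fun i : T => (i : Fin n))
          (fun j : (Tᶜ : Finset (Fin n)) => (j : Fin n)) * Matrix.diagonal c := by
      ext i j
      rw [Matrix.mul_diagonal, Matrix.submatrix_apply, Matrix.submatrix_apply]
      by_cases h : (j : Fin n) ∈ S
      · simp [hc, h, hBdef, cutTranspose, hT i.2]
      · simp only [hc, h, if_neg, hBdef, cutTranspose, hT i.2, if_pos, if_false]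
        rw [hpq (i : Fin n) (hT i.2) (j : Fin n) h]
        field_simp
        rw [eq_div_iff (hq _ h)]
    rw [heq]
    apply Matrix.rank_mul_eq_left_of_isUnit_det
    rw [Matrix.det_diagonal]
    rw [isUnit_iff_ne_zero, Finset.prod_ne_zero_iff]
    intro j _
    by_cases h : (j : Fin n) ∈ S
    · simp [hc, h]
    · simp only [hc, h, if_false]
      exact div_ne_zero (hu _ h) (hq _ h)
  have h2 : (B.submatrix (fun i : (Tᶜ : Finset (Fin n)) => (i : Fin n))
        (fun j : T => (j : Fin n))).rank
      = (A.submatrix (fun i : (Tᶜ : Finset (Fin n)) => (i : Fin n))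
        (fun j : T => (j : Fin n))).rank := by
    set d : (Tᶜ : Finset (Fin n)) → F :=
      fun i => if (i : Fin n) ∈ S then 1 else q i / u i with hd
    have heq : B.submatrix (fun i : (Tᶜ : Finset (Fin n)) => (i : Fin n))
        (fun j : T => (j : Fin n))
        = Matrix.diagonal d * A.submatrix (fun i : (Tᶜ : Finset (Fin n)) => (i : Fin n))
          (fun j : T => (j : Fin n)) := by
      ext i j
      rw [Matrix.diagonal_mul, Matrix.submatrix_apply, Matrix.submatrix_apply]
      by_cases h : (i : Fin n) ∈ S
      · simp [hd, h, hBdef, cutTranspose, hT j.2]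
      · simp only [hd, h, if_false, hBdef, cutTranspose, hT j.2, if_pos]
        rw [huv (i : Fin n) h (j : Fin n) (hT j.2)]
        field_simp
        rw [eq_div_iff (hu _ h)]
    rw [heq]
    apply Matrix.rank_mul_eq_right_of_isUnit_det
    rw [Matrix.det_diagonal]
    rw [isUnit_iff_ne_zero, Finset.prod_ne_zero_iff]
    intro i _
    by_cases h : (i : Fin n) ∈ S
    · simp [hd, h]
    · simp only [hd, h, if_false]
      exact div_ne_zero (hq _ h) (hu _ h)
  unfold IsCut
  rw [h1, h2]
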